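/- (Proposition 3: operator stabilizer entropy is bounded by unitary nullity.) Let U be a unitary matrix on (Fin N → Fin 2), let a₀ : Fin N → Fin 4, set O_U := Uᴴ * P_{a₀} * U, and let c_a := (tr(O_U * P_a)).re / D for each Pauli label a : Fin N → Fin 4. Then for every real α with 0 < α and α ≠ 1: (1/(1−α)) · Real.logb 2 (∑_a (c_a²)^α) ≤ 2·N − Real.logb 2 (card (Stab U)); that is, the operator stabilizer α-Rényi entropy M^{(α)}(O_U) is at most the unitary nullity ν(U). -/

import Mathlib

open Matrix Kronecker
open scoped Classical

noncomputable section

/-- Single-qubit Pauli matrices. -/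
def pauli : Fin 4 → Matrix (Fin 2) (Fin 2) ℂ :=
  ![1, !![0, 1; 1, 0], !![0, -Complex.I; Complex.I, 0], !![1, 0; 0, -1]]

/-- Pauli string on `N` qubits with label `a`. -/
def PauliString {N : ℕ} (a : Fin N → Fin 4) :
    Matrix (Fin N → Fin 2) (Fin N → Fin 2) ℂ :=
  fun f g => ∏ k, pauli (a k) (f k) (g k)

/-- Reduced Choi state: partial trace over the doubled-B factor of the
normalized Choi state of `O`. -/
def rhoA {ιA ιB : Type*} [Fintype ιA] [Fintype ιB]
    (O : Matrix (ιA × ιB) (ιA × ιB) ℂ) :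
    Matrix (ιA × ιA) (ιA × ιA) ℂ :=
  fun p q =>
    (1 / (Fintype.card ιA * Fintype.card ιB : ℂ)) *
      ∑ b : ιB, ∑ b' : ιB, O (p.1, b) (p.2, b') * star (O (q.1, b) (q.2, b'))

/-- Identification of `N = N_A + N_B` qubits with the pair of subsystems. -/
def qubitEquiv (NA NB : ℕ) :
    (Fin (NA + NB) → Fin 2) ≃ (Fin NA → Fin 2) × (Fin NB → Fin 2) :=
  (Equiv.arrowCongr finSumFinEquiv.symm (Equiv.refl (Fin 2))).trans
    (Equiv.sumArrowEquivProdArrow _ _ _)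

/-- Reduced Choi state of an `N = N_A + N_B` qubit operator, subsystem A
being the first `N_A` qubits. -/
def rhoAq (NA NB : ℕ)
    (O : Matrix (Fin (NA + NB) → Fin 2) (Fin (NA + NB) → Fin 2) ℂ) :
    Matrix ((Fin NA → Fin 2) × (Fin NA → Fin 2))
      ((Fin NA → Fin 2) × (Fin NA → Fin 2)) ℂ :=
  rhoA (Matrix.reindex (qubitEquiv NA NB) (qubitEquiv NA NB) O)

/-- `n`-fold replica (tensor power) of a matrix. -/
def replica {ι : Type*} (n : ℕ) (O : Matrix ι ι ℂ) :
    Matrix (Fin n → ι) (Fin n → ι) ℂ :=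
  fun f g => ∏ a, O (f a) (g a)

/-- Replica permutation operator. -/
def Tperm {ι : Type*} [DecidableEq ι] {n : ℕ} (π : Equiv.Perm (Fin n)) :
    Matrix (Fin n → ι) (Fin n → ι) ℂ :=
  fun f g => if f = g ∘ π then 1 else 0

/-- Number of cycles of a permutation, counting fixed points as 1-cycles. -/
def numCycles {n : ℕ} (π : Equiv.Perm (Fin n)) : ℕ :=
  Multiset.card π.cycleType + (Finset.univ.filter fun x => π x = x).card

/-- `δ(π) = 0` if `π` has no fixed points and all cycles of even length,
else `δ(π) = 1`. -/
def deltaOdd {n : ℕ} (π : Equiv.Perm (Fin n)) : ℕ :=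
  if (∀ x, π x ≠ x) ∧ (∀ c ∈ π.cycleType, Even c) then 0 else 1

/-- Projector onto four-fold replicated Pauli strings. -/
def LambdaPlus (N : ℕ) :
    Matrix (Fin 4 → (Fin N → Fin 2)) (Fin 4 → (Fin N → Fin 2)) ℂ :=
  (1 / (4 ^ N : ℂ)) • ∑ a : Fin N → Fin 4, replica 4 (PauliString a)

def permA : Equiv.Perm (Fin 4) := Equiv.swap 0 1 * Equiv.swap 2 3
def permB : Equiv.Perm (Fin 4) := Equiv.swap 0 3 * Equiv.swap 1 2

/-- The purity contraction permutation operator `T'` on four replicas of a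
bipartite system. -/
def Tprime {ιA ιB : Type*} [DecidableEq ιA] [DecidableEq ιB] :
    Matrix (Fin 4 → ιA × ιB) (Fin 4 → ιA × ιB) ℂ :=
  fun f g =>
    if (∀ a, (f a).1 = (g (permA a)).1 ∧ (f a).2 = (g (permB a)).2) then 1 else 0

/-- The unitary stabilizer group of `U` (as a finite set of pairs of Pauli
labels). -/
def Stab {N : ℕ} (U : Matrix (Fin N → Fin 2) (Fin N → Fin 2) ℂ) :
    Finset ((Fin N → Fin 4) × (Fin N → Fin 4)) :=
  Finset.univ.filter fun p =>
    Matrix.trace (PauliString p.1 * Uᴴ * PauliString p.2 * U) / (2 ^ N : ℂ)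
      ∈ ({1, -1} : Set ℂ)


namespace OSE

def m4 : Fin 4 → Fin 4 → Fin 4 :=
  ![![0,1,2,3], ![1,0,3,2], ![2,3,0,1], ![3,2,1,0]]

def ph : Fin 4 → Fin 4 → ℂ :=
  ![![1,1,1,1], ![1,1,Complex.I,-Complex.I], ![1,-Complex.I,1,Complex.I], ![1,Complex.I,-Complex.I,1]]

def sg : Fin 4 → Fin 4 → ℝ :=
  ![![1,1,1,1], ![1,1,-1,-1], ![1,-1,1,-1], ![1,-1,-1,1]]

lemma pauli_entry_mul (i j : Fin 4) (x y : Fin 2) :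
    (∑ z : Fin 2, pauli i x z * pauli j z y) = ph i j * pauli (m4 i j) x y := by
  fin_cases i <;> fin_cases j <;> fin_cases x <;> fin_cases y <;>
    simp [pauli, ph, m4, Fin.sum_univ_two, Matrix.one_apply] <;> ring_nf <;>
    simp [Complex.I_sq, Complex.ext_iff, Matrix.vecHead, Matrix.vecTail]

lemma pauli_entry_star (i : Fin 4) (x y : Fin 2) :
    star (pauli i y x) = pauli i x y := by
  fin_cases i <;> fin_cases x <;> fin_cases y <;>
    simp [pauli, Matrix.one_apply]

lemma pauli_diag_sum (i : Fin 4) :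
    (∑ x : Fin 2, pauli i x x) = if i = 0 then 2 else 0 := by
  fin_cases i <;> simp [pauli, Fin.sum_univ_two, Matrix.one_apply]

lemma pauli_complete (x y x' y' : Fin 2) :
    (∑ i : Fin 4, pauli i x y * pauli i x' y') =
      2 * (if x = y' ∧ x' = y then 1 else 0) := by
  fin_cases x <;> fin_cases y <;> fin_cases x' <;> fin_cases y' <;>
    simp [pauli, Fin.sum_univ_four, Matrix.one_apply] <;> ring_nf <;>
    simp [Complex.I_sq, Complex.ext_iff, Matrix.vecHead, Matrix.vecTail]

lemma ph_eq_sg_mul (i j : Fin 4) : ph i j = (sg i j : ℂ) * ph j i := by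
  fin_cases i <;> fin_cases j <;>
    simp [ph, sg, Matrix.vecHead, Matrix.vecTail] <;>
    norm_num [Complex.ext_iff]

lemma m4_comm : ∀ i j : Fin 4, m4 i j = m4 j i := by decide

lemma m4_self : ∀ i : Fin 4, m4 i i = 0 := by decide

lemma m4_zero : ∀ i : Fin 4, m4 i 0 = i := by decide

lemma m4_zero' : ∀ i : Fin 4, m4 0 i = i := by decide

lemma m4_cancel : ∀ i j : Fin 4, m4 (m4 i j) j = i := by decide

lemma m4_cancel' : ∀ i j : Fin 4, m4 i (m4 i j) = j := by decide

lemma ph_self (i : Fin 4) : ph i i = 1 := by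
  fin_cases i <;> simp [ph, Matrix.vecHead, Matrix.vecTail]

lemma ph_zero (i : Fin 4) : ph i 0 = 1 := by
  fin_cases i <;> simp [ph, Matrix.vecHead, Matrix.vecTail]

lemma ph_ne_zero (i j : Fin 4) : ph i j ≠ 0 := by
  fin_cases i <;> fin_cases j <;>
    simp [ph, Matrix.vecHead, Matrix.vecTail, Complex.I_ne_zero]

lemma sg_zero_left (j : Fin 4) : sg 0 j = 1 := by
  fin_cases j <;> norm_num [sg, Matrix.vecHead, Matrix.vecTail]

lemma sg_zero_right (i : Fin 4) : sg i 0 = 1 := by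
  fin_cases i <;> norm_num [sg, Matrix.vecHead, Matrix.vecTail]

lemma sg_symm (i j : Fin 4) : sg i j = sg j i := by
  fin_cases i <;> fin_cases j <;> norm_num [sg, Matrix.vecHead, Matrix.vecTail]

lemma sg_mul_right (i j l : Fin 4) : sg i (m4 j l) = sg i j * sg i l := by
  fin_cases i <;> fin_cases j <;> fin_cases l <;>
    simp [sg, m4]

lemma sg_mul_left (i j l : Fin 4) : sg (m4 i j) l = sg i l * sg j l := by
  fin_cases i <;> fin_cases j <;> fin_cases l <;>
    simp [sg, m4]

lemma sg_sq (i j : Fin 4) : sg i j * sg i j = 1 := by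
  fin_cases i <;> fin_cases j <;> norm_num [sg, Matrix.vecHead, Matrix.vecTail]

def anti : Fin 4 → Fin 4 := ![0, 3, 3, 1]

lemma sg_anti (i : Fin 4) (hi : i ≠ 0) : sg i (anti i) = -1 := by
  fin_cases i <;> simp_all [sg, anti]

lemma pauli_witness (i : Fin 4) :
    pauli i 0 (![0,1,1,0] i) ≠ 0 := by
  fin_cases i <;>
    simp [pauli, Matrix.one_apply, Complex.I_ne_zero, Matrix.vecHead, Matrix.vecTail]


variable {N : ℕ}

def zl (N : ℕ) : Fin N → Fin 4 := fun _ => 0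

def lmul (a b : Fin N → Fin 4) : Fin N → Fin 4 := fun k => m4 (a k) (b k)

/-- sign χ(a,b) ∈ {±1} (real valued). -/
def chi (a b : Fin N → Fin 4) : ℝ := ∏ k, sg (a k) (b k)

lemma chi_sq (a b : Fin N → Fin 4) : chi a b * chi a b = 1 := by
  rw [chi, ← Finset.prod_mul_distrib]
  exact Finset.prod_eq_one fun k _ => sg_sq _ _

lemma chi_pm (a b : Fin N → Fin 4) : chi a b = 1 ∨ chi a b = -1 :=
  mul_self_eq_one_iff.mp (chi_sq a b)

lemma chi_zl_left (b : Fin N → Fin 4) : chi (zl N) b = 1 :=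
  Finset.prod_eq_one fun k _ => sg_zero_left _

lemma chi_lmul_right (h a c : Fin N → Fin 4) :
    chi h (lmul a c) = chi h a * chi h c := by
  rw [chi, chi, chi, ← Finset.prod_mul_distrib]
  exact Finset.prod_congr rfl fun k _ => sg_mul_right _ _ _

lemma chi_lmul_left (a c h : Fin N → Fin 4) :
    chi (lmul a c) h = chi a h * chi c h := by
  rw [chi, chi, chi, ← Finset.prod_mul_distrib]
  exact Finset.prod_congr rfl fun k _ => sg_mul_left _ _ _

lemma PS_one : PauliString (zl N) = (1 : Matrix (Fin N → Fin 2) (Fin N → Fin 2) ℂ) := by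
  ext f g
  by_cases h : f = g
  · subst h
    simp [PauliString, zl, pauli, Matrix.one_apply]
  · obtain ⟨k, hk⟩ := Function.ne_iff.mp h
    rw [Matrix.one_apply_ne h, PauliString]
    exact Finset.prod_eq_zero (Finset.mem_univ k)
      (by simp [zl, pauli, Matrix.one_apply, hk])

lemma PS_mul (a b : Fin N → Fin 4) :
    PauliString a * PauliString b =
      (∏ k, ph (a k) (b k)) • PauliString (lmul a b) := by
  ext f g
  rw [Matrix.mul_apply, Matrix.smul_apply]
  simp only [PauliString, smul_eq_mul]
  calc
    ∑ h : Fin N → Fin 2, (∏ k, pauli (a k) (f k) (h k)) * ∏ k, pauli (b k) (h k) (g k)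
      = ∑ h : Fin N → Fin 2, ∏ k, (pauli (a k) (f k) (h k) * pauli (b k) (h k) (g k)) := by
        simp_rw [Finset.prod_mul_distrib]
    _ = ∏ k, ∑ z : Fin 2, pauli (a k) (f k) z * pauli (b k) z (g k) := by
        rw [Fintype.prod_sum]
    _ = ∏ k, (ph (a k) (b k) * pauli (m4 (a k) (b k)) (f k) (g k)) := by
        exact Finset.prod_congr rfl fun k _ => pauli_entry_mul _ _ _ _
    _ = (∏ k, ph (a k) (b k)) * ∏ k, pauli (lmul a b k) (f k) (g k) := by
        rw [Finset.prod_mul_distrib]; rfl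

lemma PS_mul_self (a : Fin N → Fin 4) : PauliString a * PauliString a = 1 := by
  rw [PS_mul]
  have h1 : (∏ k, ph (a k) (a k)) = 1 := Finset.prod_eq_one fun k _ => ph_self _
  have h2 : lmul a a = zl N := funext fun k => m4_self _
  rw [h1, h2, PS_one, one_smul]

lemma PS_conjT (a : Fin N → Fin 4) : (PauliString a)ᴴ = PauliString a := by
  ext f g
  rw [Matrix.conjTranspose_apply, PauliString, PauliString, star_prod]
  exact Finset.prod_congr rfl fun k _ => pauli_entry_star _ _ _

lemma PS_comm (a b : Fin N → Fin 4) :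
    PauliString a * PauliString b = (chi a b : ℂ) • (PauliString b * PauliString a) := by
  rw [PS_mul, PS_mul, smul_smul]
  have hl : lmul a b = lmul b a := funext fun k => m4_comm _ _
  rw [hl]
  congr 1
  have : (∏ k, ph (a k) (b k)) = ∏ k, ((sg (a k) (b k) : ℂ) * ph (b k) (a k)) :=
    Finset.prod_congr rfl fun k _ => ph_eq_sg_mul _ _
  rw [this, Finset.prod_mul_distrib]
  congr 1
  rw [chi]
  push_cast
  rfl

lemma PS_trace (a : Fin N → Fin 4) :
    Matrix.trace (PauliString a) = if a = zl N then ((2 : ℂ) ^ N) else 0 := by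
  have h0 : Matrix.trace (PauliString a) = ∏ k, ∑ x : Fin 2, pauli (a k) x x := by
    rw [Matrix.trace]
    simp only [Matrix.diag_apply, PauliString]
    rw [Fintype.prod_sum]
  rw [h0]
  by_cases h : a = zl N
  · subst h
    simp [zl, pauli_diag_sum, Finset.prod_const, Finset.card_univ, pauli,
      Matrix.one_apply]
  · obtain ⟨k, hk⟩ := Function.ne_iff.mp h
    rw [if_neg h]
    refine Finset.prod_eq_zero (Finset.mem_univ k) ?_
    rw [pauli_diag_sum, if_neg (by simpa [zl] using hk)]

lemma PS_ne_zero (a : Fin N → Fin 4) : PauliString a ≠ 0 := by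
  intro h
  have := congr_fun (congr_fun h (fun _ => 0)) (fun k => ![0,1,1,0] (a k))
  simp only [PauliString, Matrix.zero_apply] at this
  exact Finset.prod_ne_zero_iff.mpr (fun k _ => pauli_witness (a k)) this

lemma PS_complete (f g f' g' : Fin N → Fin 2) :
    (∑ a : Fin N → Fin 4, PauliString a f g * PauliString a f' g') =
      (2 : ℂ) ^ N * (if f = g' ∧ f' = g then 1 else 0) := by
  simp only [PauliString]
  calc
    (∑ a : Fin N → Fin 4, (∏ k, pauli (a k) (f k) (g k)) * ∏ k, pauli (a k) (f' k) (g' k))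
      = ∑ a : Fin N → Fin 4, ∏ k, (pauli (a k) (f k) (g k) * pauli (a k) (f' k) (g' k)) := by
        simp_rw [Finset.prod_mul_distrib]
    _ = ∏ k, ∑ i : Fin 4, pauli i (f k) (g k) * pauli i (f' k) (g' k) := by
        rw [Fintype.prod_sum]
    _ = ∏ k, ((2 : ℂ) * if f k = g' k ∧ f' k = g k then 1 else 0) := by
        exact Finset.prod_congr rfl fun k _ => pauli_complete _ _ _ _
    _ = (2 : ℂ) ^ N * (if f = g' ∧ f' = g then 1 else 0) := by
        rw [Finset.prod_mul_distrib]
        congr 1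
        · simp
        · by_cases h : f = g' ∧ f' = g
          · obtain ⟨h1, h2⟩ := h
            subst h1; subst h2; simp
          · rw [if_neg h]
            have : ∃ k, ¬ (f k = g' k ∧ f' k = g k) := by
              by_contra hc
              push_neg at hc
              exact h ⟨funext fun k => (hc k).1, funext fun k => (hc k).2⟩
            obtain ⟨k, hk⟩ := this
            exact Finset.prod_eq_zero (Finset.mem_univ k) (by rw [if_neg hk])


lemma cardQ (N : ℕ) : Fintype.card (Fin N → Fin 2) = 2 ^ N := by simp

lemma parseval (M : Matrix (Fin N → Fin 2) (Fin N → Fin 2) ℂ) :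
    (∑ a : Fin N → Fin 4,
        Matrix.trace (M * PauliString a) * Matrix.trace (M * PauliString a))
      = (2 : ℂ) ^ N * Matrix.trace (M * M) := by
  have h1 : ∀ a : Fin N → Fin 4, Matrix.trace (M * PauliString a)
      = ∑ p : (Fin N → Fin 2) × (Fin N → Fin 2), M p.1 p.2 * PauliString a p.2 p.1 := by
    intro a
    rw [Matrix.trace, Fintype.sum_prod_type]
    simp only [Matrix.diag_apply, Matrix.mul_apply]
  simp only [h1, Finset.sum_mul_sum]
  rw [Finset.sum_comm]
  have h2 : ∀ p : (Fin N → Fin 2) × (Fin N → Fin 2),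
      (∑ a : Fin N → Fin 4, ∑ q : (Fin N → Fin 2) × (Fin N → Fin 2),
        M p.1 p.2 * PauliString a p.2 p.1 * (M q.1 q.2 * PauliString a q.2 q.1))
      = (2 : ℂ) ^ N * (M p.1 p.2 * M p.2 p.1) := by
    intro p
    rw [Finset.sum_comm]
    have h3 : ∀ q : (Fin N → Fin 2) × (Fin N → Fin 2),
        (∑ a : Fin N → Fin 4,
          M p.1 p.2 * PauliString a p.2 p.1 * (M q.1 q.2 * PauliString a q.2 q.1))
        = (M p.1 p.2 * M q.1 q.2) * ((2:ℂ)^N * if p.2 = q.1 ∧ q.2 = p.1 then 1 else 0) := by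
      intro q
      rw [← PS_complete p.2 p.1 q.2 q.1, Finset.mul_sum]
      exact Finset.sum_congr rfl fun a _ => by ring
    simp only [h3]
    rw [Finset.sum_eq_single (p.2, p.1)]
    · simp; ring
    · intro q _ hq
      have : ¬ (p.2 = q.1 ∧ q.2 = p.1) := by
        rintro ⟨e1, e2⟩
        exact hq (Prod.ext e1.symm e2)
      rw [if_neg this, mul_zero, mul_zero]
    · intro h; exact absurd (Finset.mem_univ _) h
  simp only [h2]
  rw [← Finset.mul_sum]
  congr 1
  rw [Matrix.trace, Fintype.sum_prod_type]
  simp only [Matrix.diag_apply, Matrix.mul_apply]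

lemma unitary_trace_card (A : Matrix (Fin N → Fin 2) (Fin N → Fin 2) ℂ)
    (hA : Aᴴ * A = 1)
    (htr : Matrix.trace A = ((2 : ℂ) ^ N)) : A = 1 := by
  have col : ∀ j, ∑ i, Complex.normSq (A i j) = 1 := by
    intro j
    have := congr_fun (congr_fun hA j) j
    rw [Matrix.mul_apply, Matrix.one_apply_eq] at this
    have h2 : (((∑ i, Complex.normSq (A i j) : ℝ)) : ℂ) = 1 := by
      push_cast
      rw [← this]
      exact Finset.sum_congr rfl fun i _ => by
        rw [Matrix.conjTranspose_apply, Complex.normSq_eq_conj_mul_self]; rfl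
    exact_mod_cast h2
  have hnsq_le : ∀ i j, Complex.normSq (A i j) ≤ 1 := by
    intro i j
    calc Complex.normSq (A i j) ≤ ∑ i', Complex.normSq (A i' j) :=
          Finset.single_le_sum (f := fun i' => Complex.normSq (A i' j))
            (fun i' _ => Complex.normSq_nonneg _) (Finset.mem_univ i)
      _ = 1 := col j
  have hre_le : ∀ j, (A j j).re ≤ 1 := by
    intro j
    have h1 : (A j j).re ≤ ‖A j j‖ := Complex.re_le_norm _
    have h2 : ‖A j j‖ ≤ 1 := by
      have := hnsq_le j j
      rw [← Complex.sq_norm] at this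
      nlinarith [norm_nonneg (A j j)]
    linarith
  have hsum_re : ∑ j, (A j j).re = (2 : ℝ) ^ N := by
    have h := congrArg Complex.re htr
    rw [Matrix.trace, Complex.re_sum] at h
    have h2 : ((2:ℂ)^N).re = (2:ℝ)^N := by
      have h3 : ((2:ℂ)^N) = (((2:ℝ)^N : ℝ) : ℂ) := by push_cast; ring
      rw [h3, Complex.ofReal_re]
    simpa [h2] using h
  have hre : ∀ j, (A j j).re = 1 := by
    by_contra hne
    push_neg at hne
    obtain ⟨j₀, hj₀⟩ := hne
    have hlt : (A j₀ j₀).re < 1 := lt_of_le_of_ne (hre_le j₀) hj₀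
    have hstrict : ∑ j, (A j j).re < ∑ _j : Fin N → Fin 2, (1 : ℝ) :=
      Finset.sum_lt_sum (fun j _ => hre_le j) ⟨j₀, Finset.mem_univ j₀, hlt⟩
    rw [hsum_re, Finset.sum_const, Finset.card_univ, cardQ, nsmul_eq_mul, mul_one] at hstrict
    push_cast at hstrict
    exact lt_irrefl _ hstrict
  have hdiag : ∀ j, A j j = 1 := by
    intro j
    have h1 : Complex.normSq (A j j) = 1 := by
      have hge : 1 ≤ Complex.normSq (A j j) := by
        rw [Complex.normSq_apply]
        nlinarith [hre j, sq_nonneg (A j j).im]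
      linarith [hnsq_le j j]
    have him : (A j j).im = 0 := by
      rw [Complex.normSq_apply, hre j] at h1
      nlinarith
    exact Complex.ext (by rw [hre j]; rfl) (by rw [him]; rfl)
  have hoff : ∀ i j, i ≠ j → A i j = 0 := by
    intro i j hij
    have h1 : ∑ i', Complex.normSq (A i' j) = 1 := col j
    have h2 : Complex.normSq (A j j) = 1 := by rw [hdiag j]; simp
    have h3 : ∑ i' ∈ Finset.univ.erase j, Complex.normSq (A i' j) = 0 := by
      rw [← Finset.add_sum_erase _ _ (Finset.mem_univ j)] at h1
      linarith [h1, h2]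
    have h4 : Complex.normSq (A i j) = 0 := by
      have := (Finset.sum_eq_zero_iff_of_nonneg
        (fun i' _ => Complex.normSq_nonneg (A i' j))).mp h3 i
        (Finset.mem_erase.mpr ⟨hij, Finset.mem_univ i⟩)
      exact this
    exact Complex.normSq_eq_zero.mp h4
  ext i j
  by_cases hij : i = j
  · subst hij; rw [hdiag, Matrix.one_apply_eq]
  · rw [hoff i j hij, Matrix.one_apply_ne hij]


lemma unitary_scalar (A : Matrix (Fin N → Fin 2) (Fin N → Fin 2) ℂ)
    (hA : Aᴴ * A = 1) {ε : ℂ} (hε : ε = 1 ∨ ε = -1)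
    (htr : Matrix.trace A = ε * (2 : ℂ) ^ N) : A = ε • 1 := by
  rcases hε with h | h
  · subst h
    rw [one_smul]
    exact unitary_trace_card A hA (by rw [htr, one_mul])
  · subst h
    have hA' : (-A)ᴴ * (-A) = 1 := by
      rw [Matrix.conjTranspose_neg, Matrix.neg_mul, Matrix.mul_neg, neg_neg, hA]
    have htr' : Matrix.trace (-A) = (2:ℂ)^N := by
      rw [Matrix.trace_neg, htr]; ring
    have := unitary_trace_card (-A) hA' htr'
    have h2 : A = -(1 : Matrix (Fin N → Fin 2) (Fin N → Fin 2) ℂ) := by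
      rw [← this, neg_neg]
    rw [h2]; ext i j; simp

lemma mulcanc {X Y : Matrix (Fin N → Fin 2) (Fin N → Fin 2) ℂ} (h : X * Y = 1)
    (Z : Matrix (Fin N → Fin 2) (Fin N → Fin 2) ℂ) : X * (Y * Z) = Z := by
  rw [← Matrix.mul_assoc, h, Matrix.one_mul]

variable {U : Matrix (Fin N → Fin 2) (Fin N → Fin 2) ℂ}

section withU

variable (hU : U ∈ Matrix.unitaryGroup (Fin N → Fin 2) ℂ)
include hU

lemma hU'U : Uᴴ * U = 1 := by
  have := hU.1
  rwa [Matrix.star_eq_conjTranspose] at this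

lemma hUU' : U * Uᴴ = 1 := by
  have := hU.2
  rwa [Matrix.star_eq_conjTranspose] at this

lemma mem_Stab_iff {a b : Fin N → Fin 4} :
    (a, b) ∈ Stab U ↔ ∃ ε : ℂ, (ε = 1 ∨ ε = -1) ∧
      Uᴴ * PauliString b * U = ε • PauliString a := by
  have h2N : ((2:ℂ)^N) ≠ 0 := pow_ne_zero _ two_ne_zero
  constructor
  · intro hmem
    rw [Stab, Finset.mem_filter] at hmem
    obtain ⟨-, hmem⟩ := hmem
    simp only [Set.mem_insert_iff, Set.mem_singleton_iff] at hmem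
    have hε : ∃ ε : ℂ, (ε = 1 ∨ ε = -1) ∧
        Matrix.trace (PauliString a * Uᴴ * PauliString b * U) = ε * (2:ℂ)^N := by
      rcases hmem with h | h
      · exact ⟨1, Or.inl rfl, by field_simp at h; rw [h]; ring⟩
      · refine ⟨-1, Or.inr rfl, ?_⟩
        rw [div_eq_iff h2N] at h
        rw [h]
    obtain ⟨ε, hε, htr⟩ := hε
    set A := PauliString a * Uᴴ * PauliString b * U with hAdef
    have hAu : Aᴴ * A = 1 := by
      rw [hAdef]
      simp only [Matrix.conjTranspose_mul, Matrix.conjTranspose_conjTranspose,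
        PS_conjT, Matrix.mul_assoc]
      rw [mulcanc (PS_mul_self a), mulcanc (hUU' hU), mulcanc (PS_mul_self b), hU'U hU]
    have hA1 : A = ε • 1 := unitary_scalar A hAu hε htr
    refine ⟨ε, hε, ?_⟩
    have h3 : PauliString a * A = Uᴴ * PauliString b * U := by
      rw [hAdef]
      simp only [Matrix.mul_assoc]
      rw [mulcanc (PS_mul_self a)]
    rw [← h3, hA1]
    rw [Matrix.mul_smul, Matrix.mul_one]
  · rintro ⟨ε, hε, heq⟩
    rw [Stab, Finset.mem_filter]
    refine ⟨Finset.mem_univ _, ?_⟩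
    have h3 : PauliString a * Uᴴ * PauliString b * U
        = PauliString a * (Uᴴ * PauliString b * U) := by
      simp only [Matrix.mul_assoc]
    rw [h3, heq]
    rw [Matrix.mul_smul, Matrix.trace_smul, PS_mul_self, Matrix.trace_one]
    have hcard : ((Fintype.card (Fin N → Fin 2) : ℂ)) = (2:ℂ)^N := by
      rw [cardQ]; push_cast; ring
    rw [hcard]
    rcases hε with h | h <;> subst h <;>
      simp [Set.mem_insert_iff, h2N, div_self, smul_eq_mul]

lemma Stab_zero_mem : ((zl N, zl N)) ∈ Stab U := by
  rw [mem_Stab_iff hU]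
  exact ⟨1, Or.inl rfl, by
    rw [PS_one, Matrix.mul_one, hU'U hU, one_smul]⟩

lemma Stab_fst_zero {s : (Fin N → Fin 4) × (Fin N → Fin 4)} (hs : s ∈ Stab U)
    (h1 : s.1 = zl N) : s.2 = zl N := by
  obtain ⟨a, b⟩ := s
  simp only at h1
  subst h1
  rw [mem_Stab_iff hU] at hs
  obtain ⟨ε, hε, heq⟩ := hs
  rw [PS_one] at heq
  have hPb : PauliString b = ε • 1 := by
    have := congrArg (fun M => U * M * Uᴴ) heq
    rw [Matrix.mul_smul, Matrix.smul_mul, Matrix.mul_one] at this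
    rw [← Matrix.mul_assoc, ← Matrix.mul_assoc] at this
    rw [hUU' hU, Matrix.one_mul, Matrix.mul_assoc, hUU' hU, Matrix.mul_one] at this
    exact this
  by_contra hb
  have htr := congrArg Matrix.trace hPb
  rw [PS_trace, if_neg hb, Matrix.trace_smul, Matrix.trace_one] at htr
  have hcard : ((Fintype.card (Fin N → Fin 2) : ℂ)) = (2:ℂ)^N := by
    rw [cardQ]; push_cast; ring
  rw [hcard] at htr
  have h2N : ((2:ℂ)^N) ≠ 0 := pow_ne_zero _ two_ne_zero
  rcases hε with h | h <;> subst h <;> simp [smul_eq_mul] at htr <;>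
    first
      | exact h2N htr.symm
      | exact h2N htr

lemma Stab_mul {s t : (Fin N → Fin 4) × (Fin N → Fin 4)}
    (hs : s ∈ Stab U) (ht : t ∈ Stab U) :
    (lmul s.1 t.1, lmul s.2 t.2) ∈ Stab U := by
  rw [mem_Stab_iff hU] at hs ht ⊢
  obtain ⟨ε, hε, heq⟩ := hs
  obtain ⟨ε', hε', heq'⟩ := ht
  -- Uᴴ * PS (lmul s.2 t.2) * U = λ • PS (lmul s.1 t.1)
  have hmul : PauliString (lmul s.2 t.2)
      = (∏ k, ph (s.2 k) (t.2 k))⁻¹ • (PauliString s.2 * PauliString t.2) := by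
    rw [PS_mul, smul_smul, inv_mul_cancel₀ (Finset.prod_ne_zero_iff.mpr
      fun k _ => ph_ne_zero _ _), one_smul]
  set ω := (∏ k, ph (s.2 k) (t.2 k)) with hω
  have hωne : ω ≠ 0 := Finset.prod_ne_zero_iff.mpr fun k _ => ph_ne_zero _ _
  have key : Uᴴ * PauliString (lmul s.2 t.2) * U
      = (ω⁻¹ * ε * ε' * (∏ k, ph (s.1 k) (t.1 k))) • PauliString (lmul s.1 t.1) := by
    rw [hmul]
    rw [Matrix.mul_smul, Matrix.smul_mul]
    have : Uᴴ * (PauliString s.2 * PauliString t.2) * U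
        = (Uᴴ * PauliString s.2 * U) * (Uᴴ * PauliString t.2 * U) := by
      simp only [Matrix.mul_assoc]
      rw [mulcanc (hUU' hU)]
    rw [this, heq, heq']
    rw [Matrix.smul_mul, Matrix.mul_smul, PS_mul]
    rw [smul_smul, smul_smul, smul_smul]
  set lam := (ω⁻¹ * ε * ε' * (∏ k, ph (s.1 k) (t.1 k))) with hlam
  -- lam is ±1
  have hherm : ∀ (c : Fin N → Fin 4) (M : Matrix (Fin N → Fin 2) (Fin N → Fin 2) ℂ),
      M = Uᴴ * PauliString c * U → Mᴴ = M := by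
    intro c M hM
    rw [hM]
    simp only [Matrix.conjTranspose_mul, Matrix.conjTranspose_conjTranspose,
      PS_conjT, Matrix.mul_assoc]
  have hMh : (Uᴴ * PauliString (lmul s.2 t.2) * U)ᴴ = Uᴴ * PauliString (lmul s.2 t.2) * U :=
    hherm _ _ rfl
  rw [key] at hMh
  rw [Matrix.conjTranspose_smul, PS_conjT] at hMh
  have hlamreal : star lam = lam :=
    smul_left_injective ℂ (PS_ne_zero (lmul s.1 t.1)) hMh
  -- |lam| = 1 via unitarity
  have huni : (Uᴴ * PauliString (lmul s.2 t.2) * U)ᴴ * (Uᴴ * PauliString (lmul s.2 t.2) * U) = 1 := by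
    simp only [Matrix.conjTranspose_mul, Matrix.conjTranspose_conjTranspose,
      PS_conjT, Matrix.mul_assoc]
    rw [mulcanc (hUU' hU), mulcanc (PS_mul_self _), hU'U hU]
  rw [key] at huni
  rw [Matrix.conjTranspose_smul, PS_conjT] at huni
  rw [Matrix.smul_mul, Matrix.mul_smul, PS_mul_self, smul_smul] at huni
  have hlam2 : star lam * lam = 1 := by
    have h5 := congr_fun (congr_fun huni (fun _ => 0)) (fun _ => 0)
    simpa [Matrix.one_apply] using h5
  rw [hlamreal] at hlam2
  have hpm : lam = 1 ∨ lam = -1 := mul_self_eq_one_iff.mp hlam2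
  exact ⟨lam, hpm, key⟩

lemma V_sq (a₀ : Fin N → Fin 4) :
    (Uᴴ * PauliString a₀ * U) * (Uᴴ * PauliString a₀ * U) = 1 := by
  simp only [Matrix.mul_assoc]
  rw [mulcanc (hUU' hU), mulcanc (PS_mul_self a₀), hU'U hU]

end withU

lemma V_herm (a₀ : Fin N → Fin 4) :
    (Uᴴ * PauliString a₀ * U)ᴴ = Uᴴ * PauliString a₀ * U := by
  simp only [Matrix.conjTranspose_mul, Matrix.conjTranspose_conjTranspose,
    PS_conjT, Matrix.mul_assoc]

lemma gamma_conj (a₀ a : Fin N → Fin 4) :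
    (starRingEnd ℂ) (Matrix.trace ((Uᴴ * PauliString a₀ * U) * PauliString a))
      = Matrix.trace ((Uᴴ * PauliString a₀ * U) * PauliString a) := by
  have h1 : ((Uᴴ * PauliString a₀ * U) * PauliString a)ᴴ
      = PauliString a * (Uᴴ * PauliString a₀ * U) := by
    rw [Matrix.conjTranspose_mul, PS_conjT, V_herm]
  calc (starRingEnd ℂ) (Matrix.trace ((Uᴴ * PauliString a₀ * U) * PauliString a))
      = Matrix.trace (((Uᴴ * PauliString a₀ * U) * PauliString a)ᴴ) := by
        rw [Matrix.trace_conjTranspose]; rfl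
    _ = Matrix.trace (PauliString a * (Uᴴ * PauliString a₀ * U)) := by rw [h1]
    _ = _ := Matrix.trace_mul_comm _ _

lemma gamma_eq_re (a₀ a : Fin N → Fin 4) :
    Matrix.trace ((Uᴴ * PauliString a₀ * U) * PauliString a)
      = (((Matrix.trace ((Uᴴ * PauliString a₀ * U) * PauliString a)).re : ℝ) : ℂ) :=
  (Complex.conj_eq_iff_re.mp (gamma_conj a₀ a)).symm

section withU2
variable (hU : U ∈ Matrix.unitaryGroup (Fin N → Fin 2) ℂ)
include hU

lemma sum_sq_re (a₀ : Fin N → Fin 4) :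
    ∑ a : Fin N → Fin 4,
      ((Matrix.trace ((Uᴴ * PauliString a₀ * U) * PauliString a)).re) ^ 2
      = (2:ℝ)^N * (2:ℝ)^N := by
  have hpar := parseval (Uᴴ * PauliString a₀ * U)
  rw [V_sq hU a₀, Matrix.trace_one] at hpar
  have hcard : ((Fintype.card (Fin N → Fin 2) : ℂ)) = (2:ℂ)^N := by
    rw [cardQ]; push_cast; ring
  rw [hcard] at hpar
  have h2 : ((∑ a : Fin N → Fin 4,
      ((Matrix.trace ((Uᴴ * PauliString a₀ * U) * PauliString a)).re) ^ 2 : ℝ) : ℂ)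
      = (((2:ℝ)^N * (2:ℝ)^N : ℝ) : ℂ) := by
    push_cast
    rw [← hpar]
    refine Finset.sum_congr rfl fun a _ => ?_
    rw [sq, ← gamma_eq_re a₀ a]
  exact_mod_cast h2

lemma sum_p_one (a₀ : Fin N → Fin 4) :
    ∑ a : Fin N → Fin 4,
      (((Matrix.trace ((Uᴴ * PauliString a₀ * U) * PauliString a)).re) / (2^N : ℝ)) ^ 2
      = 1 := by
  have h2N : ((2:ℝ)^N) ≠ 0 := by positivity
  simp only [div_pow]
  rw [← Finset.sum_div, sum_sq_re hU a₀]
  field_simp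

lemma supp_comm (a₀ a : Fin N → Fin 4) {s : (Fin N → Fin 4) × (Fin N → Fin 4)}
    (hs : s ∈ Stab U)
    (hne : Matrix.trace ((Uᴴ * PauliString a₀ * U) * PauliString a) ≠ 0) :
    chi s.1 a = chi s.2 a₀ := by
  have hs' : (s.1, s.2) ∈ Stab U := by rwa [Prod.mk.eta]
  obtain ⟨ε, hε, heq⟩ := (mem_Stab_iff hU).mp hs'
  have hε2 : ε * ε = 1 := by rcases hε with h | h <;> subst h <;> ring
  have hPs1 : PauliString s.1 = ε • (Uᴴ * PauliString s.2 * U) := by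
    rw [heq, smul_smul, hε2, one_smul]
  have hPbP : PauliString s.2 * PauliString a₀ * PauliString s.2
      = (chi s.2 a₀ : ℂ) • PauliString a₀ := by
    rw [PS_comm s.2 a₀, Matrix.smul_mul, Matrix.mul_assoc, PS_mul_self, Matrix.mul_one]
  have hPbP' : PauliString s.2 * (PauliString a₀ * (PauliString s.2 * U))
      = (chi s.2 a₀ : ℂ) • (PauliString a₀ * U) := by
    have := congrArg (fun M => M * U) hPbP
    simp only [Matrix.smul_mul, Matrix.mul_assoc] at this
    exact this
  have key1 : PauliString s.1 * ((Uᴴ * PauliString a₀ * U) * PauliString s.1)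
      = (chi s.2 a₀ : ℂ) • (Uᴴ * PauliString a₀ * U) := by
    rw [hPs1]
    simp only [Matrix.smul_mul, Matrix.mul_smul, smul_smul]
    rw [hε2, one_smul]
    simp only [Matrix.mul_assoc]
    rw [mulcanc (hUU' hU), mulcanc (hUU' hU), hPbP', Matrix.mul_smul]
  have hPaP : PauliString s.1 * (PauliString a * PauliString s.1)
      = (chi s.1 a : ℂ) • PauliString a := by
    rw [← Matrix.mul_assoc, PS_comm s.1 a, Matrix.smul_mul, Matrix.mul_assoc,
      PS_mul_self, Matrix.mul_one]
  have hT1 : Matrix.trace ((PauliString s.1 * ((Uᴴ * PauliString a₀ * U) * PauliString s.1))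
        * PauliString a)
      = (chi s.2 a₀ : ℂ) * Matrix.trace ((Uᴴ * PauliString a₀ * U) * PauliString a) := by
    rw [key1, Matrix.smul_mul, Matrix.trace_smul]
    rfl
  have hT2 : Matrix.trace ((PauliString s.1 * ((Uᴴ * PauliString a₀ * U) * PauliString s.1))
        * PauliString a)
      = (chi s.1 a : ℂ) * Matrix.trace ((Uᴴ * PauliString a₀ * U) * PauliString a) := by
    have e1 : (PauliString s.1 * ((Uᴴ * PauliString a₀ * U) * PauliString s.1))
        * PauliString a
        = PauliString s.1 * ((Uᴴ * PauliString a₀ * U) * (PauliString s.1 * PauliString a)) := by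
      simp only [Matrix.mul_assoc]
    rw [e1, Matrix.trace_mul_comm]
    have e2 : (Uᴴ * PauliString a₀ * U) * (PauliString s.1 * PauliString a) * PauliString s.1
        = (Uᴴ * PauliString a₀ * U) * (PauliString s.1 * (PauliString a * PauliString s.1)) := by
      simp only [Matrix.mul_assoc]
    rw [e2, hPaP, Matrix.mul_smul, Matrix.trace_smul]
    rfl
  have := hT1.symm.trans hT2
  have hchi : (chi s.2 a₀ : ℂ) = (chi s.1 a : ℂ) := mul_right_cancel₀ hne this
  exact_mod_cast hchi.symm

end withU2

lemma cardLab (N : ℕ) : Fintype.card (Fin N → Fin 4) = 4 ^ N := by simp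

lemma chi_sum_zero {h : Fin N → Fin 4} (hh : h ≠ zl N) :
    ∑ a : Fin N → Fin 4, chi h a = 0 := by
  obtain ⟨k₀, hk₀⟩ := Function.ne_iff.mp hh
  set a₁ : Fin N → Fin 4 := fun k => if k = k₀ then anti (h k₀) else 0 with ha₁
  have hchia₁ : chi h a₁ = -1 := by
    rw [chi, Finset.prod_eq_single k₀]
    · simp only [ha₁, if_pos rfl]
      exact sg_anti _ (by simpa [zl] using hk₀)
    · intro k _ hk
      simp [ha₁, hk, sg_zero_right]
    · intro hmem; exact absurd (Finset.mem_univ _) hmem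
  have hinv : Function.Involutive (fun a : Fin N → Fin 4 => lmul a a₁) :=
    fun a => funext fun k => m4_cancel _ _
  have hre : ∑ a : Fin N → Fin 4, chi h a
      = ∑ a : Fin N → Fin 4, chi h (lmul a a₁) :=
    (Equiv.sum_comp hinv.toPerm (fun a => chi h a)).symm
  have hre2 : ∑ a : Fin N → Fin 4, chi h (lmul a a₁)
      = (∑ a : Fin N → Fin 4, chi h a) * (-1) := by
    rw [Finset.sum_mul]
    exact Finset.sum_congr rfl fun a _ => by
      rw [chi_lmul_right, hchia₁]
  have := hre.trans hre2
  linarith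

section withU3
variable (hU : U ∈ Matrix.unitaryGroup (Fin N → Fin 2) ℂ)
include hU

lemma stab_inner_nonneg (a₀ a : Fin N → Fin 4) :
    0 ≤ ∑ s ∈ Stab U, chi s.1 a * chi s.2 a₀ := by
  by_cases hall : ∀ s ∈ Stab U, chi s.1 a * chi s.2 a₀ = 1
  · rw [Finset.sum_congr rfl hall, Finset.sum_const, nsmul_eq_mul, mul_one]
    positivity
  · push_neg at hall
    obtain ⟨s₀, hs₀, hs₀ne⟩ := hall
    have hs₀val : chi s₀.1 a * chi s₀.2 a₀ = -1 := by
      rcases chi_pm s₀.1 a with h1 | h1 <;> rcases chi_pm s₀.2 a₀ with h2 | h2 <;>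
        rw [h1, h2] at hs₀ne ⊢ <;> simp_all
    have key : ∑ s ∈ Stab U, chi s.1 a * chi s.2 a₀
        = ∑ s ∈ Stab U, (chi (lmul s₀.1 s.1) a * chi (lmul s₀.2 s.2) a₀) := by
      refine Finset.sum_nbij'
        (i := fun s => (lmul s₀.1 s.1, lmul s₀.2 s.2))
        (j := fun s => (lmul s₀.1 s.1, lmul s₀.2 s.2)) ?_ ?_ ?_ ?_ ?_
      · intro s hs; exact Stab_mul hU hs₀ hs
      · intro s hs; exact Stab_mul hU hs₀ hs
      · intro s _; exact Prod.ext (funext fun k => m4_cancel' _ _)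
          (funext fun k => m4_cancel' _ _)
      · intro s _; exact Prod.ext (funext fun k => m4_cancel' _ _)
          (funext fun k => m4_cancel' _ _)
      · intro s _
        simp only [chi_lmul_left]
        linear_combination
          (-(chi s.1 a * chi s.2 a₀ * chi s₀.2 a₀ * chi s₀.2 a₀)) * chi_sq s₀.1 a
          + (-(chi s.1 a * chi s.2 a₀)) * chi_sq s₀.2 a₀
    have key2 : ∑ s ∈ Stab U, (chi (lmul s₀.1 s.1) a * chi (lmul s₀.2 s.2) a₀)
        = -∑ s ∈ Stab U, chi s.1 a * chi s.2 a₀ := by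
      rw [← Finset.sum_neg_distrib]
      refine Finset.sum_congr rfl fun s _ => ?_
      simp only [chi_lmul_left]
      have : chi s₀.1 a * chi s.1 a * (chi s₀.2 a₀ * chi s.2 a₀)
          = (chi s₀.1 a * chi s₀.2 a₀) * (chi s.1 a * chi s.2 a₀) := by ring
      rw [this, hs₀val]
      ring
    have := key.trans key2
    linarith

lemma card_bound (a₀ : Fin N → Fin 4) :
    ((Finset.univ.filter fun a : Fin N → Fin 4 =>
        Matrix.trace ((Uᴴ * PauliString a₀ * U) * PauliString a) ≠ 0).card : ℝ)
      * ((Stab U).card : ℝ) ≤ (4:ℝ)^N := by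
  have htot : ∑ a : Fin N → Fin 4, ∑ s ∈ Stab U, chi s.1 a * chi s.2 a₀
      = (4:ℝ)^N := by
    rw [Finset.sum_comm]
    rw [Finset.sum_eq_single (zl N, zl N)]
    · simp only [chi_zl_left, one_mul]
      rw [Finset.sum_const, nsmul_eq_mul, mul_one, Finset.card_univ, cardLab]
      push_cast; ring
    · intro s hs hne
      have h1 : s.1 ≠ zl N := by
        intro h
        exact hne (Prod.ext h (Stab_fst_zero hU hs h))
      rw [← Finset.sum_mul, chi_sum_zero h1, zero_mul]
    · intro habs
      exact absurd (Stab_zero_mem hU) habs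
  set supp := Finset.univ.filter fun a : Fin N → Fin 4 =>
      Matrix.trace ((Uᴴ * PauliString a₀ * U) * PauliString a) ≠ 0 with hsupp
  have hsupp_part : ∑ a ∈ supp, ∑ s ∈ Stab U, chi s.1 a * chi s.2 a₀
      = (supp.card : ℝ) * ((Stab U).card : ℝ) := by
    have hone : ∀ a ∈ supp, ∑ s ∈ Stab U, chi s.1 a * chi s.2 a₀
        = ((Stab U).card : ℝ) := by
      intro a ha
      rw [hsupp, Finset.mem_filter] at ha
      have : ∀ s ∈ Stab U, chi s.1 a * chi s.2 a₀ = 1 := by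
        intro s hs
        rw [supp_comm hU a₀ a hs ha.2]
        exact chi_sq _ _
      rw [Finset.sum_congr rfl this, Finset.sum_const, nsmul_eq_mul, mul_one]
    rw [Finset.sum_congr rfl hone, Finset.sum_const, nsmul_eq_mul]
  have hrest : 0 ≤ ∑ a ∈ Finset.univ.filter (fun a : Fin N → Fin 4 =>
      ¬ Matrix.trace ((Uᴴ * PauliString a₀ * U) * PauliString a) ≠ 0),
        ∑ s ∈ Stab U, chi s.1 a * chi s.2 a₀ :=
    Finset.sum_nonneg fun a _ => stab_inner_nonneg hU a₀ a
  have hsplit := Finset.sum_filter_add_sum_filter_not Finset.univ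
    (fun a : Fin N → Fin 4 =>
      Matrix.trace ((Uᴴ * PauliString a₀ * U) * PauliString a) ≠ 0)
    (fun a => ∑ s ∈ Stab U, chi s.1 a * chi s.2 a₀)
  rw [htot] at hsplit  -- hsplit might not rewrite; combine instead
  rw [← hsplit, ← hsupp]
  nlinarith [hsupp_part, hrest]

end withU3
end OSE

open OSE in
/-- Proposition 3: the operator stabilizer `α`-Rényi entropy of
a Heisenberg-evolved Pauli string is bounded by the unitary nullity. -/
theorem ose_le_nullity (N : ℕ)
    (U : Matrix (Fin N → Fin 2) (Fin N → Fin 2) ℂ)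
    (hU : U ∈ Matrix.unitaryGroup (Fin N → Fin 2) ℂ)
    (a₀ : Fin N → Fin 4) :
    ∀ α : ℝ, 0 < α → α ≠ 1 →
      (1 / (1 - α)) * Real.logb 2 (∑ a : Fin N → Fin 4,
          (((Matrix.trace ((Uᴴ * PauliString a₀ * U) * PauliString a)).re
              / (2 ^ N : ℝ)) ^ 2) ^ α) ≤
        2 * (N : ℝ) - Real.logb 2 ((Stab U).card) := by
  intro α hα hα1
  classical
  set p : (Fin N → Fin 4) → ℝ := fun a =>
    ((Matrix.trace ((Uᴴ * PauliString a₀ * U) * PauliString a)).re / (2 ^ N : ℝ)) ^ 2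
    with hp
  have hp_nonneg : ∀ a, 0 ≤ p a := fun a => sq_nonneg _
  have hsum1 : ∑ a, p a = 1 := sum_p_one hU a₀
  set S : Finset (Fin N → Fin 4) := Finset.univ.filter fun a =>
    Matrix.trace ((Uᴴ * PauliString a₀ * U) * PauliString a) ≠ 0 with hS
  have hmemS : ∀ a, a ∈ S ↔ p a ≠ 0 := by
    intro a
    rw [hS, Finset.mem_filter]
    constructor
    · rintro ⟨-, h⟩
      intro hpa
      apply h
      rw [gamma_eq_re a₀ a]
      have h2N : ((2:ℝ)^N) ≠ 0 := by positivity
      have : (Matrix.trace ((Uᴴ * PauliString a₀ * U) * PauliString a)).re = 0 := by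
        have := pow_eq_zero_iff (n := 2) (by norm_num) |>.mp hpa
        field_simp at this
        simpa using this
      rw [this]
      norm_num
    · intro h
      refine ⟨Finset.mem_univ _, fun habs => h ?_⟩
      rw [hp]
      simp only [habs, Complex.zero_re, zero_div]
      norm_num
  have hSP : ∀ a ∉ S, p a = 0 := by
    intro a ha
    by_contra h
    exact ha ((hmemS a).mpr h)
  set sc := S.card with hsc
  set K := (Stab U).card with hK
  have hKpos : 0 < K := Finset.card_pos.mpr ⟨(zl N, zl N), Stab_zero_mem hU⟩
  have hscpos : 0 < sc := by
    rw [hsc, Finset.card_pos]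
    by_contra h
    push_neg at h
    have : ∑ a, p a = 0 := Finset.sum_eq_zero fun a _ => by
      by_contra hpa
      exact absurd ((hmemS a).mpr hpa) (by simp [Finset.eq_empty_iff_forall_notMem.mp
        h a])
    rw [hsum1] at this
    norm_num at this
  have hcount : (sc : ℝ) * (K : ℝ) ≤ (4:ℝ)^N := card_bound hU a₀
  have hscR : (0:ℝ) < sc := by exact_mod_cast hscpos
  have hKR : (0:ℝ) < K := by exact_mod_cast hKpos
  -- sums restricted to S
  have hsum1S : ∑ a ∈ S, p a = 1 := by
    rw [← hsum1]
    exact Finset.sum_subset (Finset.subset_univ S) fun a _ ha => hSP a ha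
  have hrestrict : ∑ a : Fin N → Fin 4, p a ^ α = ∑ a ∈ S, p a ^ α := by
    refine (Finset.sum_subset (Finset.subset_univ S) fun a _ ha => ?_).symm
    rw [hSP a ha, Real.zero_rpow (ne_of_gt hα)]
  have hposS : ∀ a ∈ S, 0 < p a := fun a ha =>
    lt_of_le_of_ne (hp_nonneg a) (Ne.symm ((hmemS a).mp ha))
  have hTpos : 0 < ∑ a ∈ S, p a ^ α := by
    obtain ⟨a1, ha1⟩ := Finset.card_pos.mp hscpos
    exact Finset.sum_pos' (fun a ha => (Real.rpow_pos_of_pos (hposS a ha) α).le)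
      ⟨a1, ha1, Real.rpow_pos_of_pos (hposS _ ha1) α⟩
  -- core: (1/(1-α)) * logb 2 (∑ p^α) ≤ logb 2 sc
  have hlogb_pow : ∀ x : ℝ, 0 < x → ∀ y : ℝ, Real.logb 2 (x ^ y) = y * Real.logb 2 x :=
    fun x hx y => Real.logb_rpow_eq_mul_logb_of_pos hx
  have hsc_pow : (sc:ℝ) * (1/(sc:ℝ))^α = (sc:ℝ) ^ ((1:ℝ) - α) := by
    rw [one_div, Real.inv_rpow (le_of_lt hscR), Real.rpow_sub hscR, Real.rpow_one,
      div_eq_mul_inv]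
  have hcore : (1 / (1 - α)) * Real.logb 2 (∑ a : Fin N → Fin 4, p a ^ α)
      ≤ Real.logb 2 sc := by
    rcases lt_or_gt_of_ne hα1 with hlt | hgt
    · -- α < 1
      have h1α : (0:ℝ) < 1 - α := by linarith
      have hq : (1:ℝ) ≤ 1/α := by
        rw [le_div_iff₀ hα]; linarith
      have J := Real.rpow_arith_mean_le_arith_mean_rpow S
        (fun _ => 1/(sc:ℝ)) (fun a => p a ^ α)
        (fun i _ => by positivity)
        (by rw [Finset.sum_const, nsmul_eq_mul, ← hsc, mul_one_div_cancel (ne_of_gt hscR)])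
        (fun i hi => (Real.rpow_pos_of_pos (hposS i hi) α).le) hq
      have hppow : ∀ a ∈ S, (p a ^ α) ^ ((1:ℝ)/α) = p a := by
        intro a ha
        rw [← Real.rpow_mul (hp_nonneg a), mul_one_div, div_self (ne_of_gt hα),
          Real.rpow_one]
      have hsum_wz : ∑ a ∈ S, 1/(sc:ℝ) * (p a ^ α) ^ ((1:ℝ)/α) = 1/(sc:ℝ) := by
        rw [Finset.sum_congr rfl (fun a ha => by rw [hppow a ha])]
        rw [← Finset.mul_sum, hsum1S, mul_one]
      rw [hsum_wz] at J
      have hx0 : 0 ≤ ∑ a ∈ S, 1/(sc:ℝ) * p a ^ α := by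
        refine Finset.sum_nonneg fun a ha => ?_
        have := (Real.rpow_pos_of_pos (hposS a ha) α).le
        positivity
      have J2 : ∑ a ∈ S, 1/(sc:ℝ) * p a ^ α ≤ (1/(sc:ℝ)) ^ α := by
        have h5 := Real.rpow_le_rpow (Real.rpow_nonneg hx0 _) J hα.le
        rwa [← Real.rpow_mul hx0, one_div_mul_cancel (ne_of_gt hα), Real.rpow_one] at h5
      have hsum_le : ∑ a ∈ S, p a ^ α ≤ (sc:ℝ) ^ ((1:ℝ) - α) := by
        rw [← hsc_pow]
        have h6 : ∑ a ∈ S, p a ^ α = (sc:ℝ) * ∑ a ∈ S, 1/(sc:ℝ) * p a ^ α := by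
          rw [Finset.mul_sum]
          refine Finset.sum_congr rfl fun a ha => ?_
          rw [← mul_assoc, mul_one_div_cancel (ne_of_gt hscR), one_mul]
        rw [h6]
        exact mul_le_mul_of_nonneg_left J2 (le_of_lt hscR)
      have hlog1 : Real.logb 2 (∑ a : Fin N → Fin 4, p a ^ α)
          ≤ (1 - α) * Real.logb 2 sc := by
        rw [hrestrict]
        calc Real.logb 2 (∑ a ∈ S, p a ^ α)
            ≤ Real.logb 2 ((sc:ℝ) ^ ((1:ℝ)-α)) :=
              Real.logb_le_logb_of_le one_lt_two hTpos hsum_le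
          _ = (1-α) * Real.logb 2 sc := hlogb_pow _ hscR _
      have h7 := mul_le_mul_of_nonneg_left hlog1
        (le_of_lt (by positivity : (0:ℝ) < 1/(1-α)))
      calc (1/(1-α)) * Real.logb 2 (∑ a : Fin N → Fin 4, p a ^ α)
          ≤ (1/(1-α)) * ((1-α) * Real.logb 2 sc) := h7
        _ = Real.logb 2 sc := by field_simp
    · -- 1 < α
      have h1α : 1 - α < 0 := by linarith
      have J := Real.rpow_arith_mean_le_arith_mean_rpow S
        (fun _ => 1/(sc:ℝ)) p
        (fun i _ => by positivity)
        (by rw [Finset.sum_const, nsmul_eq_mul, ← hsc, mul_one_div_cancel (ne_of_gt hscR)])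
        (fun i hi => (hposS i hi).le) hgt.le
      have hw : ∑ a ∈ S, 1/(sc:ℝ) * p a = 1/(sc:ℝ) := by
        rw [← Finset.mul_sum, hsum1S, mul_one]
      rw [hw] at J
      have J2 : (sc:ℝ) ^ ((1:ℝ) - α) ≤ ∑ a ∈ S, p a ^ α := by
        rw [← hsc_pow]
        have h5 := mul_le_mul_of_nonneg_left J (le_of_lt hscR)
        have h6 : (sc:ℝ) * ∑ a ∈ S, 1/(sc:ℝ) * p a ^ α = ∑ a ∈ S, p a ^ α := by
          rw [Finset.mul_sum]
          refine Finset.sum_congr rfl fun a ha => ?_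
          rw [← mul_assoc, mul_one_div_cancel (ne_of_gt hscR), one_mul]
        rwa [h6] at h5
      have hlog1 : (1 - α) * Real.logb 2 sc
          ≤ Real.logb 2 (∑ a : Fin N → Fin 4, p a ^ α) := by
        rw [hrestrict]
        calc (1-α) * Real.logb 2 sc
            = Real.logb 2 ((sc:ℝ) ^ ((1:ℝ)-α)) := (hlogb_pow _ hscR _).symm
          _ ≤ Real.logb 2 (∑ a ∈ S, p a ^ α) :=
              Real.logb_le_logb_of_le one_lt_two (Real.rpow_pos_of_pos hscR _) J2
      have hneg : 1/(1-α) ≤ 0 := by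
        apply le_of_lt
        apply div_neg_of_pos_of_neg <;> [norm_num; linarith]
      have h7 := mul_le_mul_of_nonpos_left hlog1 hneg
      calc (1/(1-α)) * Real.logb 2 (∑ a : Fin N → Fin 4, p a ^ α)
          ≤ (1/(1-α)) * ((1-α) * Real.logb 2 sc) := h7
        _ = Real.logb 2 sc := by
          have : (1:ℝ) - α ≠ 0 := by linarith
          field_simp
  -- final: logb 2 sc ≤ 2N - logb 2 K
  have hfin : Real.logb 2 (sc:ℝ) ≤ 2 * (N:ℝ) - Real.logb 2 (K:ℝ) := by
    have hKle : (K:ℝ) ≤ (4:ℝ)^N / sc := by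
      rw [le_div_iff₀ hscR]
      nlinarith [hcount]
    have hlog := Real.logb_le_logb_of_le one_lt_two hKR hKle
    have h4 : Real.logb 2 ((4:ℝ)^N / sc) = 2 * N - Real.logb 2 sc := by
      rw [Real.logb_div (by positivity) (ne_of_gt hscR)]
      congr 1
      rw [show (4:ℝ) = 2^2 by norm_num, ← pow_mul, Real.logb_pow,
        Real.logb_self_eq_one one_lt_two]
      push_cast; ring
    rw [h4] at hlog
    linarith
  calc (1 / (1 - α)) * Real.logb 2 (∑ a : Fin N → Fin 4, p a ^ α)
      ≤ Real.logb 2 sc := hcore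
    _ ≤ 2 * (N:ℝ) - Real.logb 2 K := hfin


end
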